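/- Let 0 < ε < δ < 1. If K ⊂ 𝔽_qⁿ is an ε-Kakeya set of rank r, then there exists a δ-Kakeya set A ⊂ 𝔽_qⁿ of rank r with cardinality |A| ≤ ⌈log(1−δ)/log(1−ε)⌉ · |K|. -/

import Mathlib

open Set

noncomputable section

/-- The Grassmannian `Gr_{n,r}(F)` of `r`-dimensional linear subspaces of `Fⁿ`. -/
def grassmannian (F : Type*) [Field F] (n r : ℕ) : Set (Submodule F (Fin n → F)) :=
  {S | Module.finrank F S = r}

/-- `K ⊆ Fⁿ` is an `ε`-Kakeya set of rank `r`: it contains a translate of at least an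
`ε`-proportion of the `r`-dimensional subspaces of `Fⁿ`. -/
def IsKakeyaWith (F : Type*) [Field F] (n r : ℕ) (ε : ℝ) (K : Set (Fin n → F)) : Prop :=
  ε * (Nat.card (grassmannian F n r) : ℝ) ≤
    (Nat.card {S : Submodule F (Fin n → F) |
      Module.finrank F S = r ∧ ∃ x : Fin n → F, ∀ y ∈ S, x + y ∈ K} : ℝ)

section KakeyaAux

open Finset

variable {F : Type*} [Field F]

private lemma mapSymmMap {V : Type*} [AddCommGroup V] [Module F V] (e : V ≃ₗ[F] V)
    (p : Submodule F V) :
    (p.map (e : V →ₗ[F] V)).map (e.symm : V →ₗ[F] V) = p := by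
  ext x; simp [Submodule.mem_map_equiv]

private lemma mapTrans {V : Type*} [AddCommGroup V] [Module F V] (e₁ e₂ : V ≃ₗ[F] V)
    (p : Submodule F V) :
    p.map ((e₁.trans e₂) : V →ₗ[F] V) = (p.map (e₁ : V →ₗ[F] V)).map (e₂ : V →ₗ[F] V) := by
  ext x; simp [Submodule.mem_map_equiv]

private lemma existsEquivMapEq {V : Type*} [AddCommGroup V] [Module F V] [FiniteDimensional F V]
    (S S' : Submodule F V) (h : Module.finrank F S = Module.finrank F S') :
    ∃ g : V ≃ₗ[F] V, S.map (g : V →ₗ[F] V) = S' := by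
  obtain ⟨C, hC⟩ := S.exists_isCompl
  obtain ⟨C', hC'⟩ := S'.exists_isCompl
  have h1 := Submodule.finrank_add_eq_of_isCompl hC
  have h2 := Submodule.finrank_add_eq_of_isCompl hC'
  have hfin : Module.finrank F C = Module.finrank F C' := by omega
  let e1 : S ≃ₗ[F] S' := LinearEquiv.ofFinrankEq _ _ h
  let e2 : C ≃ₗ[F] C' := LinearEquiv.ofFinrankEq _ _ hfin
  refine ⟨((Submodule.prodEquivOfIsCompl S C hC).symm.trans (e1.prodCongr e2)).trans
    (Submodule.prodEquivOfIsCompl S' C' hC'), ?_⟩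
  have hle : S.map ((((Submodule.prodEquivOfIsCompl S C hC).symm.trans (e1.prodCongr e2)).trans
      (Submodule.prodEquivOfIsCompl S' C' hC')) : V →ₗ[F] V) ≤ S' := by
    rintro _ ⟨x, hx, rfl⟩
    have hx' : x ∈ S := hx
    set xs : S := ⟨x, hx'⟩ with hxs
    have hsymm : (Submodule.prodEquivOfIsCompl S C hC).symm x = (xs, 0) :=
      Submodule.prodEquivOfIsCompl_symm_apply_left S C hC xs
    simp only [LinearEquiv.coe_coe, LinearEquiv.trans_apply, hsymm, LinearEquiv.prodCongr_apply,
      map_zero, Submodule.coe_prodEquivOfIsCompl', Submodule.coe_zero, add_zero]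
    exact Submodule.coe_mem _
  refine Submodule.eq_of_le_of_finrank_eq hle ?_
  rw [LinearEquiv.finrank_map_eq]
  omega

open scoped Classical

variable [Fintype F] {n r : ℕ}

private noncomputable instance {V : Type*} [AddCommGroup V] [Module F V] [Finite V] :
    Finite (V ≃ₗ[F] V) :=
  Finite.of_injective (fun g : V ≃ₗ[F] V => (⇑g : V → V)) DFunLike.coe_injective

variable (F n r) in
private noncomputable def GrF : Finset (Submodule F (Fin n → F)) :=
  univ.filter fun S => Module.finrank F S = r

variable (F n r) in
private noncomputable def TF (K : Set (Fin n → F)) : Finset (Submodule F (Fin n → F)) :=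
  univ.filter fun S => Module.finrank F S = r ∧ ∃ x : Fin n → F, ∀ y ∈ S, x + y ∈ K

private lemma mem_TF (L : Set (Fin n → F)) (S : Submodule F (Fin n → F)) :
    S ∈ TF F n r L ↔ (Module.finrank F S = r ∧ ∃ x : Fin n → F, ∀ y ∈ S, x + y ∈ L) := by
  rw [TF, Finset.mem_filter]
  exact ⟨fun h => h.2, fun h => ⟨Finset.mem_univ _, h⟩⟩

variable (F n r) in
private noncomputable def covF (K : Set (Fin n → F))
    (l : List ((Fin n → F) ≃ₗ[F] (Fin n → F))) : Finset (Submodule F (Fin n → F)) :=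
  l.foldr (fun g acc =>
    ((TF F n r K).image fun S => S.map (g : (Fin n → F) →ₗ[F] (Fin n → F))) ∪ acc) ∅

variable (F n) in
private noncomputable def AFs (K : Set (Fin n → F))
    (l : List ((Fin n → F) ≃ₗ[F] (Fin n → F))) : Finset (Fin n → F) :=
  l.foldr (fun g acc => K.toFinset.image (fun v => g v) ∪ acc) ∅

private lemma AFs_card_le (K : Set (Fin n → F)) (l : List ((Fin n → F) ≃ₗ[F] (Fin n → F))) :
    (AFs F n K l).card ≤ l.length * K.toFinset.card := by
  induction l with
  | nil => simp [AFs]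
  | cons g l ih =>
    calc (AFs F n K (g :: l)).card ≤ (K.toFinset.image (fun v => g v)).card + (AFs F n K l).card :=
          Finset.card_union_le _ _
      _ ≤ K.toFinset.card + l.length * K.toFinset.card :=
          add_le_add (Finset.card_image_le) ih
      _ = (g :: l).length * K.toFinset.card := by simp [List.length_cons]; ring

private lemma covF_spec (K : Set (Fin n → F)) (l : List ((Fin n → F) ≃ₗ[F] (Fin n → F)))
    (S : Submodule F (Fin n → F)) (hS : S ∈ covF F n r K l) :
    Module.finrank F S = r ∧ ∃ x : Fin n → F, ∀ y ∈ S, x + y ∈ (↑(AFs F n K l) : Set (Fin n → F)) := by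
  induction l with
  | nil => simp [covF] at hS
  | cons g l ih =>
    rw [covF, List.foldr_cons, Finset.mem_union] at hS
    rcases hS with hS | hS
    · obtain ⟨S₀, hS₀, rfl⟩ := Finset.mem_image.1 hS
      rw [TF, Finset.mem_filter] at hS₀
      obtain ⟨-, hrank, x, hx⟩ := hS₀
      refine ⟨by rw [LinearEquiv.finrank_map_eq]; exact hrank, g x, ?_⟩
      rintro y hy
      obtain ⟨z, hz, rfl⟩ := Submodule.mem_map.1 hy
      have hco : g x + (g : (Fin n → F) →ₗ[F] (Fin n → F)) z = g (x + z) := by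
        simp
      rw [hco]
      have hmem : g (x + z) ∈ K.toFinset.image (fun v => g v) :=
        Finset.mem_image_of_mem _ (Set.mem_toFinset.2 (hx z hz))
      show g (x + z) ∈ (AFs F n K (g :: l) : Set (Fin n → F))
      rw [AFs, List.foldr_cons]
      exact Finset.mem_coe.2 (Finset.mem_union_left _ hmem)
    · obtain ⟨hrank, x, hx⟩ := ih hS
      refine ⟨hrank, x, fun y hy => ?_⟩
      show x + y ∈ (AFs F n K (g :: l) : Set (Fin n → F))
      rw [AFs, List.foldr_cons]
      exact Finset.mem_coe.2 (Finset.mem_union_right _ (Finset.mem_coe.1 (hx y hy)))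

private lemma kakeya_step (ε : ℝ) (hε : 0 < ε) (K : Set (Fin n → F))
    (hT : ε * ((GrF F n r).card : ℝ) ≤ ((TF F n r K).card : ℝ))
    (hGr : 0 < (GrF F n r).card)
    (U : Finset (Submodule F (Fin n → F))) (hU : U ⊆ GrF F n r) :
    ∃ g : (Fin n → F) ≃ₗ[F] (Fin n → F),
      (((U \ (TF F n r K).image fun S =>
          S.map (g : (Fin n → F) →ₗ[F] (Fin n → F))).card : ℝ)) ≤ (1 - ε) * U.card := by
  haveI : Fintype ((Fin n → F) ≃ₗ[F] (Fin n → F)) := Fintype.ofFinite _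
  -- T is nonempty
  have hGrpos : (0 : ℝ) < (GrF F n r).card := by exact_mod_cast hGr
  have hTpos : 0 < ((TF F n r K).card : ℝ) := lt_of_lt_of_le (by positivity) hT
  obtain ⟨S₀, hS₀⟩ := Finset.card_pos.1 (by exact_mod_cast hTpos)
  have hS₀r : Module.finrank F S₀ = r := ((Finset.mem_filter.1 hS₀).2).1
  have hrankGr : ∀ S ∈ GrF F n r, Module.finrank F S = r := fun S hS => (Finset.mem_filter.1 hS).2
  have hrankT : ∀ S ∈ TF F n r K, Module.finrank F S = r :=
    fun S hS => ((Finset.mem_filter.1 hS).2).1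
  -- transporter count is constant
  have htrans : ∀ S₁ S₂ S₃ S₄ : Submodule F (Fin n → F), Module.finrank F S₁ = r →
      Module.finrank F S₂ = r → Module.finrank F S₃ = r → Module.finrank F S₄ = r →
      (univ.filter fun g : (Fin n → F) ≃ₗ[F] (Fin n → F) =>
        S₁.map (g : (Fin n → F) →ₗ[F] (Fin n → F)) = S₂).card =
      (univ.filter fun g : (Fin n → F) ≃ₗ[F] (Fin n → F) =>
        S₃.map (g : (Fin n → F) →ₗ[F] (Fin n → F)) = S₄).card := by
    intro S₁ S₂ S₃ S₄ h₁ h₂ h₃ h₄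
    obtain ⟨a, ha⟩ := existsEquivMapEq S₁ S₃ (by rw [h₁, h₃])
    obtain ⟨b, hb⟩ := existsEquivMapEq S₂ S₄ (by rw [h₂, h₄])
    refine Finset.card_bij' (fun g _ => a.symm.trans (g.trans b))
      (fun g _ => a.trans (g.trans b.symm)) ?_ ?_ ?_ ?_
    · intro g hg
      simp only [Finset.mem_filter, Finset.mem_univ, true_and] at hg ⊢
      rw [mapTrans, mapTrans, ← ha, mapSymmMap, hg, hb]
    · intro g hg
      simp only [Finset.mem_filter, Finset.mem_univ, true_and] at hg ⊢
      rw [mapTrans, mapTrans, ha, hg, ← hb, mapSymmMap]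
    · intro g _; ext x; simp
    · intro g _; ext x; simp
  -- |E| = |Gr| * c
  have hE : Fintype.card ((Fin n → F) ≃ₗ[F] (Fin n → F)) = (GrF F n r).card *
      (univ.filter fun g : (Fin n → F) ≃ₗ[F] (Fin n → F) =>
        S₀.map (g : (Fin n → F) →ₗ[F] (Fin n → F)) = S₀).card := by
    have H : ∀ g ∈ (univ : Finset ((Fin n → F) ≃ₗ[F] (Fin n → F))),
        S₀.map (g : (Fin n → F) →ₗ[F] (Fin n → F)) ∈ GrF F n r := by
      intro g _
      rw [GrF, Finset.mem_filter]
      exact ⟨Finset.mem_univ _, by rw [LinearEquiv.finrank_map_eq]; exact hS₀r⟩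
    rw [← Finset.card_univ,
      Finset.card_eq_sum_card_fiberwise (f := fun g : (Fin n → F) ≃ₗ[F] (Fin n → F) => S₀.map (g : (Fin n → F) →ₗ[F] (Fin n → F)))
        (t := GrF F n r) H,
      Finset.sum_congr rfl (fun S' hS' => htrans S₀ S' S₀ S₀ hS₀r (hrankGr S' hS') hS₀r hS₀r),
      Finset.sum_const, smul_eq_mul]
  -- sum of f over E
  have hsum : (∑ g : (Fin n → F) ≃ₗ[F] (Fin n → F),
      ((TF F n r K).filter fun S => S.map (g : (Fin n → F) →ₗ[F] (Fin n → F)) ∈ U).card)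
      = (TF F n r K).card * (U.card *
        (univ.filter fun g : (Fin n → F) ≃ₗ[F] (Fin n → F) =>
          S₀.map (g : (Fin n → F) →ₗ[F] (Fin n → F)) = S₀).card) := by
    have step1 : ∀ g : (Fin n → F) ≃ₗ[F] (Fin n → F),
        ((TF F n r K).filter fun S => S.map (g : (Fin n → F) →ₗ[F] (Fin n → F)) ∈ U).card
        = ∑ S ∈ TF F n r K, if S.map (g : (Fin n → F) →ₗ[F] (Fin n → F)) ∈ U then 1 else 0 := by
      intro g; rw [Finset.card_filter]
    rw [Finset.sum_congr rfl fun g _ => step1 g, Finset.sum_comm]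
    have inner : ∀ S ∈ TF F n r K, (∑ g : (Fin n → F) ≃ₗ[F] (Fin n → F),
        if S.map (g : (Fin n → F) →ₗ[F] (Fin n → F)) ∈ U then 1 else 0)
        = U.card * (univ.filter fun g : (Fin n → F) ≃ₗ[F] (Fin n → F) =>
          S₀.map (g : (Fin n → F) →ₗ[F] (Fin n → F)) = S₀).card := by
      intro S hS
      rw [← Finset.card_filter]
      have H : ∀ g ∈ (univ.filter fun g : (Fin n → F) ≃ₗ[F] (Fin n → F) =>
          S.map (g : (Fin n → F) →ₗ[F] (Fin n → F)) ∈ U),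
          S.map (g : (Fin n → F) →ₗ[F] (Fin n → F)) ∈ U := fun g hg => (Finset.mem_filter.1 hg).2
      rw [Finset.card_eq_sum_card_fiberwise
        (f := fun g : (Fin n → F) ≃ₗ[F] (Fin n → F) =>
          S.map (g : (Fin n → F) →ₗ[F] (Fin n → F))) (t := U) H]
      have fib : ∀ S' ∈ U, (((univ.filter fun g : (Fin n → F) ≃ₗ[F] (Fin n → F) =>
          S.map (g : (Fin n → F) →ₗ[F] (Fin n → F)) ∈ U)).filter
          (fun g : (Fin n → F) ≃ₗ[F] (Fin n → F) =>
            S.map (g : (Fin n → F) →ₗ[F] (Fin n → F)) = S')).card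
          = (univ.filter fun g : (Fin n → F) ≃ₗ[F] (Fin n → F) =>
            S₀.map (g : (Fin n → F) →ₗ[F] (Fin n → F)) = S₀).card := by
        intro S' hS'
        have heq : ((univ.filter fun g : (Fin n → F) ≃ₗ[F] (Fin n → F) =>
            S.map (g : (Fin n → F) →ₗ[F] (Fin n → F)) ∈ U)).filter
            (fun g : (Fin n → F) ≃ₗ[F] (Fin n → F) =>
              S.map (g : (Fin n → F) →ₗ[F] (Fin n → F)) = S')
            = univ.filter fun g : (Fin n → F) ≃ₗ[F] (Fin n → F) =>
              S.map (g : (Fin n → F) →ₗ[F] (Fin n → F)) = S' := by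
          ext g
          simp only [Finset.mem_filter, Finset.mem_univ, true_and]
          constructor
          · tauto
          · intro h; exact ⟨h ▸ hS', h⟩
        rw [heq]
        exact htrans S S' S₀ S₀ (hrankT S hS) (hrankGr S' (hU hS')) hS₀r hS₀r
      rw [Finset.sum_congr rfl fib, Finset.sum_const, smul_eq_mul]
    rw [Finset.sum_congr rfl inner, Finset.sum_const, smul_eq_mul]
  -- existence of good g
  have hmain : ∃ g : (Fin n → F) ≃ₗ[F] (Fin n → F), (TF F n r K).card * U.card ≤
      ((TF F n r K).filter fun S =>
        S.map (g : (Fin n → F) →ₗ[F] (Fin n → F)) ∈ U).card * (GrF F n r).card := by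
    have hsum2 : (∑ _g : (Fin n → F) ≃ₗ[F] (Fin n → F), (TF F n r K).card * U.card)
        ≤ ∑ g : (Fin n → F) ≃ₗ[F] (Fin n → F),
          ((TF F n r K).filter fun S =>
            S.map (g : (Fin n → F) →ₗ[F] (Fin n → F)) ∈ U).card * (GrF F n r).card := by
      rw [Finset.sum_const, ← Finset.sum_mul, hsum, Finset.card_univ, hE, smul_eq_mul]
      exact le_of_eq (by ring)
    obtain ⟨g, _, hg⟩ := Finset.exists_le_of_sum_le
      ⟨LinearEquiv.refl F (Fin n → F), Finset.mem_univ _⟩ hsum2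
    exact ⟨g, hg⟩
  obtain ⟨g, hg⟩ := hmain
  refine ⟨g, ?_⟩
  -- f ≤ |U ∩ X|
  have hinj : ((TF F n r K).filter fun S =>
      S.map (g : (Fin n → F) →ₗ[F] (Fin n → F)) ∈ U).card
      ≤ (U ∩ ((TF F n r K).image fun S =>
        S.map (g : (Fin n → F) →ₗ[F] (Fin n → F)))).card := by
    refine Finset.card_le_card_of_injOn
      (fun S => S.map (g : (Fin n → F) →ₗ[F] (Fin n → F))) ?_ ?_
    · intro S hS
      rw [Finset.mem_coe, Finset.mem_inter]
      obtain ⟨hST, hSU⟩ := Finset.mem_filter.1 hS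
      exact ⟨hSU, Finset.mem_image_of_mem _ hST⟩
    · intro x _ y _ h
      exact Submodule.map_injective_of_injective g.injective h
  -- ε|U| ≤ f
  have hεU : ε * U.card ≤ (((TF F n r K).filter fun S =>
      S.map (g : (Fin n → F) →ₗ[F] (Fin n → F)) ∈ U).card : ℝ) := by
    have h1 : ((TF F n r K).card : ℝ) * U.card ≤ (((TF F n r K).filter fun S =>
        S.map (g : (Fin n → F) →ₗ[F] (Fin n → F)) ∈ U).card : ℝ) * (GrF F n r).card := by
      exact_mod_cast hg
    have h2 : ε * ((GrF F n r).card : ℝ) * U.card ≤ ((TF F n r K).card : ℝ) * U.card :=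
      mul_le_mul_of_nonneg_right hT (by positivity)
    have h3 : ε * (U.card : ℝ) * (GrF F n r).card ≤ (((TF F n r K).filter fun S =>
        S.map (g : (Fin n → F) →ₗ[F] (Fin n → F)) ∈ U).card : ℝ) * (GrF F n r).card := by
      nlinarith
    exact le_of_mul_le_mul_right h3 hGrpos
  have hsplit := Finset.card_sdiff_add_card_inter U
    ((TF F n r K).image fun S => S.map (g : (Fin n → F) →ₗ[F] (Fin n → F)))
  have hcast : (((U \ (TF F n r K).image fun S =>
      S.map (g : (Fin n → F) →ₗ[F] (Fin n → F))).card : ℝ))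
      + (((U ∩ (TF F n r K).image fun S =>
        S.map (g : (Fin n → F) →ₗ[F] (Fin n → F))).card : ℝ)) = U.card := by
    exact_mod_cast hsplit
  have hinj' : ((((TF F n r K).filter fun S =>
      S.map (g : (Fin n → F) →ₗ[F] (Fin n → F)) ∈ U).card : ℝ))
      ≤ (((U ∩ (TF F n r K).image fun S =>
        S.map (g : (Fin n → F) →ₗ[F] (Fin n → F))).card : ℝ)) := by
    exact_mod_cast hinj
  linarith

private lemma kakeya_iter (ε : ℝ) (hε : 0 < ε) (hε1 : ε < 1) (K : Set (Fin n → F))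
    (hT : ε * ((GrF F n r).card : ℝ) ≤ ((TF F n r K).card : ℝ))
    (hGr : 0 < (GrF F n r).card) (k : ℕ) :
    ∃ l : List ((Fin n → F) ≃ₗ[F] (Fin n → F)), l.length = k ∧
      (((GrF F n r \ covF F n r K l).card : ℝ)) ≤ (1 - ε) ^ k * (GrF F n r).card := by
  induction k with
  | zero =>
    refine ⟨[], rfl, ?_⟩
    simp [covF]
  | succ k ih =>
    obtain ⟨l, hlen, hle⟩ := ih
    set U := GrF F n r \ covF F n r K l with hUdef
    obtain ⟨g, hg⟩ := kakeya_step ε hε K hT hGr U (Finset.sdiff_subset)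
    refine ⟨g :: l, by simp [hlen], ?_⟩
    have hcov : covF F n r K (g :: l)
        = ((TF F n r K).image fun S => S.map (g : (Fin n → F) →ₗ[F] (Fin n → F)))
          ∪ covF F n r K l := by
      rw [covF, List.foldr_cons]; rfl
    have hsd : GrF F n r \ covF F n r K (g :: l)
        = U \ ((TF F n r K).image fun S => S.map (g : (Fin n → F) →ₗ[F] (Fin n → F))) := by
      rw [hcov, hUdef]; ext S; simp only [Finset.mem_sdiff, Finset.mem_union]; tauto
    rw [hsd]
    calc ((U \ _).card : ℝ) ≤ (1 - ε) * U.card := hg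
      _ ≤ (1 - ε) * ((1 - ε) ^ k * (GrF F n r).card) :=
          mul_le_mul_of_nonneg_left hle (by linarith)
      _ = (1 - ε) ^ (k + 1) * (GrF F n r).card := by ring

end KakeyaAux

set_option maxHeartbeats 2000000 in
/-- **Lemma.** Let `0 < ε < δ < 1`.  If `K ⊆ 𝔽_qⁿ` is an `ε`-Kakeya set of rank `r`,
then there exists a `δ`-Kakeya set `A ⊆ 𝔽_qⁿ` of rank `r` with cardinality
`|A| ≤ ⌈log(1-δ)/log(1-ε)⌉ · |K|`. -/
theorem eps_kakeya_to_delta_kakeya (F : Type*) [Field F] [Fintype F]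
    (n r : ℕ) (hr : 1 ≤ r) (hrn : r < n)
    (ε δ : ℝ) (hε : 0 < ε) (hεδ : ε < δ) (hδ : δ < 1)
    (K : Set (Fin n → F)) (hK : IsKakeyaWith F n r ε K) :
    ∃ A : Set (Fin n → F), IsKakeyaWith F n r δ A ∧
      (Nat.card A : ℝ) ≤ (⌈Real.log (1 - δ) / Real.log (1 - ε)⌉ : ℝ) * Nat.card K := by
  classical
  have hε1 : ε < 1 := hεδ.trans hδ
  have h1ε : (0 : ℝ) < 1 - ε := by linarith
  have h1δ : (0 : ℝ) < 1 - δ := by linarith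
  have hlogε : Real.log (1 - ε) < 0 := Real.log_neg h1ε (by linarith)
  have hlogδ : Real.log (1 - δ) < 0 := Real.log_neg h1δ (by linarith)
  have hxpos : 0 < Real.log (1 - δ) / Real.log (1 - ε) :=
    div_pos_iff.2 (Or.inr ⟨hlogδ, hlogε⟩)
  set m : ℕ := (⌈Real.log (1 - δ) / Real.log (1 - ε)⌉).toNat with hm
  have hmcast : (m : ℝ) = (⌈Real.log (1 - δ) / Real.log (1 - ε)⌉ : ℝ) := by
    exact_mod_cast congrArg (Int.cast : ℤ → ℝ)
      (Int.toNat_of_nonneg (le_of_lt (Int.ceil_pos.2 hxpos)))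
  have hmge : Real.log (1 - δ) / Real.log (1 - ε) ≤ (m : ℝ) := by
    rw [hmcast]; exact Int.le_ceil _
  have hpow : (1 - ε) ^ m ≤ 1 - δ := by
    rw [← Real.log_le_log_iff (by positivity) h1δ, Real.log_pow]
    calc (m : ℝ) * Real.log (1 - ε)
        ≤ (Real.log (1 - δ) / Real.log (1 - ε)) * Real.log (1 - ε) :=
          mul_le_mul_of_nonpos_right hmge (le_of_lt hlogε)
      _ = Real.log (1 - δ) := div_mul_cancel₀ _ (ne_of_lt hlogε)
  -- Grassmannian is nonempty
  have hGr : 0 < (GrF F n r).card := by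
    have hv : LinearIndependent F (fun i : Fin r => Pi.basisFun F (Fin n) (Fin.castLE hrn.le i)) :=
      (Pi.basisFun F (Fin n)).linearIndependent.comp _ (Fin.castLE_injective hrn.le)
    have hfr : Module.finrank F
        (Submodule.span F (Set.range fun i : Fin r => Pi.basisFun F (Fin n) (Fin.castLE hrn.le i)))
        = r := by
      rw [finrank_span_eq_card hv, Fintype.card_fin]
    exact Finset.card_pos.2 ⟨_, Finset.mem_filter.2 ⟨Finset.mem_univ _, hfr⟩⟩
  -- translate Nat.card statements to Finset cards
  have hGrCard : (Nat.card (grassmannian F n r) : ℝ) = ((GrF F n r).card : ℝ) := by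
    rw [grassmannian, Nat.card_coe_set_eq, Set.ncard_eq_toFinset_card', Set.toFinset_setOf]
    rfl
  have hTCard : ∀ L : Set (Fin n → F),
      (Nat.card {S : Submodule F (Fin n → F) |
        Module.finrank F S = r ∧ ∃ x : Fin n → F, ∀ y ∈ S, x + y ∈ L} : ℝ)
      = ((TF F n r L).card : ℝ) := by
    intro L
    rw [Nat.card_coe_set_eq, Set.ncard_eq_toFinset_card', Set.toFinset_setOf]
    norm_num [TF]
  have hT : ε * ((GrF F n r).card : ℝ) ≤ ((TF F n r K).card : ℝ) := by
    rw [← hGrCard, ← hTCard K]; exact hK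
  obtain ⟨l, hlen, hle⟩ := kakeya_iter ε hε hε1 K hT hGr m
  refine ⟨(↑(AFs F n K l) : Set (Fin n → F)), ?_, ?_⟩
  · -- δ-Kakeya
    rw [IsKakeyaWith, hGrCard, hTCard]
    have hsub : GrF F n r ∩ covF F n r K l ⊆ TF F n r (↑(AFs F n K l) : Set (Fin n → F)) := by
      intro S hS
      obtain ⟨hS1, hS2⟩ := Finset.mem_inter.1 hS
      obtain ⟨hrank, x, hx⟩ := covF_spec K l S hS2
      exact (mem_TF _ _).2 ⟨hrank, x, hx⟩
    have hcard : ((GrF F n r ∩ covF F n r K l).card : ℝ)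
        ≤ ((TF F n r (↑(AFs F n K l) : Set (Fin n → F))).card : ℝ) := by
      exact_mod_cast Finset.card_le_card hsub
    have hsplit := Finset.card_sdiff_add_card_inter (GrF F n r) (covF F n r K l)
    have hsplit' : ((GrF F n r \ covF F n r K l).card : ℝ)
        + ((GrF F n r ∩ covF F n r K l).card : ℝ) = ((GrF F n r).card : ℝ) := by
      exact_mod_cast hsplit
    have hpow' : (1 - ε) ^ m * ((GrF F n r).card : ℝ) ≤ (1 - δ) * ((GrF F n r).card : ℝ) :=
      mul_le_mul_of_nonneg_right hpow (by positivity)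
    linarith
  · -- cardinality bound
    have hA : (Nat.card (↑(AFs F n K l) : Set (Fin n → F)) : ℝ) = ((AFs F n K l).card : ℝ) := by
      rw [Nat.card_coe_set_eq, Set.ncard_coe_finset]
    have hKc : (Nat.card K : ℝ) = (K.toFinset.card : ℝ) := by
      rw [Nat.card_coe_set_eq, Set.ncard_eq_toFinset_card']
    rw [hA, hKc, ← hmcast]
    calc ((AFs F n K l).card : ℝ) ≤ (l.length * K.toFinset.card : ℕ) := by
          exact_mod_cast AFs_card_le K l
      _ = (m : ℝ) * K.toFinset.card := by rw [hlen]; push_cast; ring
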